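/- arXiv:2403.05251 — 6 statements merged into one kernel-verified Lean document; each statement's English description precedes it below -/
import Mathlib

section
/- Let β, γ > 0 with β ≠ γ, and define g(x) = (γ/β)·((e^{βx} − 1)/(e^{γx} − 1)) − 1 for x > 0. If β > γ then g is monotone increasing on (0, ∞), and if β < γ then g is monotone decreasing on (0, ∞). -/
open Real Set

lemma psi_anti : StrictAntiOn (fun u : ℝ => (1 - Real.exp (-u)) / u) (Set.Ioi 0) := by
  apply strictAntiOn_of_deriv_neg (convex_Ioi 0)
  · exact ((continuous_const.sub (Real.continuous_exp.comp continuous_neg)).continuousOn).div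
      continuousOn_id (fun x hx => ne_of_gt hx)
  · intro x hx
    rw [interior_Ioi] at hx
    have hx0 : x ≠ 0 := ne_of_gt hx
    have h1 : HasDerivAt (fun u : ℝ => 1 - Real.exp (-u)) (Real.exp (-x)) x := by
      have := ((Real.hasDerivAt_exp (-x)).comp x (hasDerivAt_neg x))
      exact ((hasDerivAt_const x (1:ℝ)).sub this).congr_deriv (by simp)
    have hd : HasDerivAt (fun u : ℝ => (1 - Real.exp (-u)) / u)
        ((Real.exp (-x) * x - (1 - Real.exp (-x)) * 1) / x ^ 2) x :=
      h1.div (hasDerivAt_id x) hx0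
    rw [hd.deriv]
    apply div_neg_of_neg_of_pos _ (by positivity)
    have hlt : x + 1 < Real.exp x := Real.add_one_lt_exp hx0
    have he : Real.exp (-x) = (Real.exp x)⁻¹ := Real.exp_neg x
    have hex : 0 < Real.exp x := Real.exp_pos x
    rw [he]
    have : (Real.exp x)⁻¹ * (x + 1) < (Real.exp x)⁻¹ * Real.exp x :=
      mul_lt_mul_of_pos_left hlt (inv_pos.mpr hex)
    rw [inv_mul_cancel₀ (ne_of_gt hex)] at this
    nlinarith

lemma key (a c : ℝ) (hc : 0 < c) (hca : c < a) :
    c * (1 - Real.exp (-a)) < a * (1 - Real.exp (-c)) := by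
  have h := psi_anti (mem_Ioi.mpr hc) (mem_Ioi.mpr (hc.trans hca)) hca
  simp only at h
  have ha : 0 < a := hc.trans hca
  rw [div_lt_div_iff₀ ha hc] at h
  linarith

lemma numer_pos (β γ x : ℝ) (hγ : 0 < γ) (hlt : γ < β) (hx : 0 < x) :
    γ * Real.exp (γ * x) * (Real.exp (β * x) - 1)
      < β * Real.exp (β * x) * (Real.exp (γ * x) - 1) := by
  have hk := key (β * x) (γ * x) (mul_pos hγ hx) (by nlinarith)
  have hA : (0:ℝ) < Real.exp (β * x) := Real.exp_pos _
  have hC : (0:ℝ) < Real.exp (γ * x) := Real.exp_pos _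
  have heA : Real.exp (-(β * x)) = (Real.exp (β * x))⁻¹ := Real.exp_neg _
  have heC : Real.exp (-(γ * x)) = (Real.exp (γ * x))⁻¹ := Real.exp_neg _
  rw [heA, heC] at hk
  have := mul_lt_mul_of_pos_right hk (mul_pos hA hC)
  have h1 : γ * x * (1 - (Real.exp (β*x))⁻¹) * (Real.exp (β*x) * Real.exp (γ*x))
      = x * (γ * Real.exp (γ * x) * (Real.exp (β * x) - 1)) := by
    field_simp
  have h2 : β * x * (1 - (Real.exp (γ*x))⁻¹) * (Real.exp (β*x) * Real.exp (γ*x))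
      = x * (β * Real.exp (β * x) * (Real.exp (γ * x) - 1)) := by
    field_simp
  rw [h1, h2] at this
  exact lt_of_mul_lt_mul_left this hx.le

lemma exp_lin (β : ℝ) (x : ℝ) :
    HasDerivAt (fun y => Real.exp (β * y) - 1) (β * Real.exp (β * x)) x := by
  have h : HasDerivAt (fun y : ℝ => β * y) (β * 1) x := (hasDerivAt_id x).const_mul β
  have := ((Real.hasDerivAt_exp (β * x)).comp x h).sub_const 1
  simpa [mul_comm] using this

lemma g_deriv (β γ x : ℝ) (hγ : 0 < γ) (hx : 0 < x) :
    HasDerivAt (fun x => (γ / β) * ((Real.exp (β * x) - 1) / (Real.exp (γ * x) - 1)) - 1)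
      ((γ / β) * ((β * Real.exp (β * x) * (Real.exp (γ * x) - 1)
        - (Real.exp (β * x) - 1) * (γ * Real.exp (γ * x))) / (Real.exp (γ * x) - 1) ^ 2)) x := by
  have hden : Real.exp (γ * x) - 1 ≠ 0 := by
    have : (1:ℝ) < Real.exp (γ * x) := by
      simpa using Real.exp_lt_exp.mpr (mul_pos hγ hx)
    linarith
  exact (((exp_lin β x).div (exp_lin γ x) hden).const_mul (γ / β)).sub_const 1

/-- For `β, γ > 0` with `β ≠ γ`, the function
`g x = (γ/β) * ((e^{βx} - 1)/(e^{γx} - 1)) - 1` is (strictly) increasing on `(0,∞)`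
when `β > γ`, and (strictly) decreasing on `(0,∞)` when `β < γ`. -/
theorem stmt_0 (β γ : ℝ) (hβ : 0 < β) (hγ : 0 < γ) (hne : β ≠ γ)
    (g : ℝ → ℝ)
    (hg : ∀ x, g x = (γ / β) * ((Real.exp (β * x) - 1) / (Real.exp (γ * x) - 1)) - 1) :
    (β > γ → StrictMonoOn g (Set.Ioi (0 : ℝ))) ∧
      (β < γ → StrictAntiOn g (Set.Ioi (0 : ℝ))) := by
  have hgfun : g = fun x => (γ / β) * ((Real.exp (β * x) - 1) / (Real.exp (γ * x) - 1)) - 1 :=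
    funext hg
  subst hgfun
  have hcont : ContinuousOn
      (fun x => (γ / β) * ((Real.exp (β * x) - 1) / (Real.exp (γ * x) - 1)) - 1) (Ioi 0) := by
    apply ContinuousOn.sub _ continuousOn_const
    apply ContinuousOn.mul continuousOn_const
    apply ContinuousOn.div
    · exact ((Real.continuous_exp.comp (continuous_const.mul continuous_id)).sub
        continuous_const).continuousOn
    · exact ((Real.continuous_exp.comp (continuous_const.mul continuous_id)).sub
        continuous_const).continuousOn
    · intro x hx
      have : (1:ℝ) < Real.exp (γ * x) := by
        simpa using Real.exp_lt_exp.mpr (mul_pos hγ hx)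
      exact sub_ne_zero.mpr (ne_of_gt this)
  constructor
  · intro hgt
    apply strictMonoOn_of_deriv_pos (convex_Ioi 0) hcont
    intro x hx
    rw [interior_Ioi] at hx
    rw [(g_deriv β γ x hγ hx).deriv]
    have hn := numer_pos β γ x hγ hgt hx
    have hden : (0:ℝ) < Real.exp (γ * x) - 1 := by
      have : (1:ℝ) < Real.exp (γ * x) := by
        simpa using Real.exp_lt_exp.mpr (mul_pos hγ hx)
      linarith
    apply mul_pos (by positivity)
    apply div_pos _ (by positivity)
    nlinarith
  · intro hlt
    apply strictAntiOn_of_deriv_neg (convex_Ioi 0) hcont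
    intro x hx
    rw [interior_Ioi] at hx
    rw [(g_deriv β γ x hγ hx).deriv]
    have hn := numer_pos γ β x hβ hlt hx
    have hden : (0:ℝ) < Real.exp (γ * x) - 1 := by
      have : (1:ℝ) < Real.exp (γ * x) := by
        simpa using Real.exp_lt_exp.mpr (mul_pos hγ hx)
      linarith
    apply mul_neg_of_pos_of_neg (by positivity)
    apply div_neg_of_neg_of_pos _ (by positivity)
    nlinarith
end

section
/- Let 0 < β < λ. Then the relative error in the reversed hazard rate for the Marshall–Olkin multivariate exponential series system, E(x) = (λ/β)·((e^{βx} − 1)/(e^{λx} − 1)) − 1, is negative for every x > 0 and is monotone decreasing in x on (0, ∞). -/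
lemma rpow_slope_anti {r p q : ℝ} (hr0 : 0 < r) (hr1 : r < 1) (hp : 1 < p) (hpq : p < q) :
    (q ^ r - 1) / (q - 1) < (p ^ r - 1) / (p - 1) := by
  have hconc := Real.strictConcaveOn_rpow hr0 hr1
  have h1 : (1 : ℝ) ∈ Set.Ici (0 : ℝ) := by norm_num
  have hq : q ∈ Set.Ici (0 : ℝ) := Set.mem_Ici.2 (by linarith)
  have key := hconc.slope_anti_adjacent h1 hq hp hpq
  simp only [Real.one_rpow] at key
  have hp1 : (0:ℝ) < p - 1 := by linarith
  have hq1 : (0:ℝ) < q - 1 := by linarith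
  have hqp : (0:ℝ) < q - p := by linarith
  rw [div_lt_div_iff₀ hqp hp1] at key
  rw [div_lt_div_iff₀ hq1 hp1]
  nlinarith [key]

lemma bernoulli_strict {r p : ℝ} (hr0 : 0 < r) (hr1 : r < 1) (hp : 1 < p) :
    p ^ r - 1 < r * (p - 1) := by
  have h := rpow_one_add_lt_one_add_mul_self (s := p - 1) (by linarith)
    (by intro h; linarith) hr0 hr1
  have : (1 + (p - 1)) = p := by ring
  rw [this] at h
  linarith

/-- For `0 < β < λ`, the relative error in the reversed hazard rate of the
Marshall–Olkin multivariate exponential series system,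
`E x = (λ/β) * ((e^{βx} - 1)/(e^{λx} - 1)) - 1`, is negative for every `x > 0`
and is (strictly) decreasing on `(0,∞)`. -/
theorem stmt_3 (β lam : ℝ) (hβ : 0 < β) (hlt : β < lam)
    (E : ℝ → ℝ)
    (hE : ∀ x, E x = (lam / β) * ((Real.exp (β * x) - 1) / (Real.exp (lam * x) - 1)) - 1) :
    (∀ x > (0 : ℝ), E x < 0) ∧ StrictAntiOn E (Set.Ioi (0 : ℝ)) := by
  have hlam : 0 < lam := hβ.trans hlt
  set r : ℝ := β / lam with hr
  have hr0 : 0 < r := div_pos hβ hlam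
  have hr1 : r < 1 := (div_lt_one hlam).2 hlt
  have hexp : ∀ x : ℝ, Real.exp (β * x) = Real.exp (lam * x) ^ r := by
    intro x
    rw [Real.rpow_def_of_pos (Real.exp_pos _), Real.log_exp]
    congr 1
    field_simp [hr]
    rw [hr]; field_simp
  have hp1 : ∀ x : ℝ, 0 < x → 1 < Real.exp (lam * x) := by
    intro x hx
    rw [show (1:ℝ) = Real.exp 0 by simp]
    exact Real.exp_lt_exp.2 (by positivity)
  constructor
  · intro x hx
    rw [hE x, hexp x]
    set p := Real.exp (lam * x) with hpdef
    have hp := hp1 x hx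
    have hb := bernoulli_strict hr0 hr1 hp
    have h1 : (p ^ r - 1) / (p - 1) < r := by
      rw [div_lt_iff₀ (by linarith)]
      linarith
    have hβlam : (lam / β) * r = 1 := by field_simp [hr]; rw [hr]; field_simp
    have hpos : 0 < lam / β := div_pos hlam hβ
    nlinarith [h1, hpos]
  · intro x hx y hy hxy
    rw [hE x, hE y, hexp x, hexp y]
    set p := Real.exp (lam * x) with hpdef
    set q := Real.exp (lam * y) with hqdef
    have hp := hp1 x hx
    have hpq : p < q := Real.exp_lt_exp.2 (by nlinarith [Set.mem_Ioi.mp hx])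
    have key := rpow_slope_anti hr0 hr1 hp hpq
    have hpos : 0 < lam / β := div_pos hlam hβ
    have := mul_lt_mul_of_pos_left key hpos
    linarith
end

section
/- Let 0 < β < λ. Then for every x > 0, −1 < (λ/β)·((e^{βx} − 1)/(e^{λx} − 1)) − 1 < 0; that is, the absolute error |E(x)| in the reversed hazard rate of the Marshall–Olkin multivariate exponential series system is bounded between 0 and 1. -/
/-- For `0 < β < λ` and every `x > 0`,
`-1 < (λ/β) * ((e^{βx} - 1)/(e^{λx} - 1)) - 1 < 0`: the absolute error in the
reversed hazard rate of the Marshall–Olkin multivariate exponential series system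
lies strictly between 0 and 1. -/
theorem stmt_4 (β lam : ℝ) (hβ : 0 < β) (hlt : β < lam) :
    ∀ x > (0 : ℝ),
      -1 < (lam / β) * ((Real.exp (β * x) - 1) / (Real.exp (lam * x) - 1)) - 1 ∧
        (lam / β) * ((Real.exp (β * x) - 1) / (Real.exp (lam * x) - 1)) - 1 < 0 := by
  intro x hx
  have hlam : 0 < lam := hβ.trans hlt
  have hbx : 0 < β * x := mul_pos hβ hx
  have hlx : 0 < lam * x := mul_pos hlam hx
  have hb1 : 0 < Real.exp (β * x) - 1 := by
    linarith [Real.exp_lt_exp.mpr hbx, Real.exp_zero]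
  have hl1 : 0 < Real.exp (lam * x) - 1 := by
    linarith [Real.exp_lt_exp.mpr hlx, Real.exp_zero]
  have hsec := (strictConvexOn_exp).secant_strict_mono (a := 0) (x := β * x) (y := lam * x)
    trivial trivial trivial hbx.ne' hlx.ne'
    (by nlinarith)
  simp only [Real.exp_zero, sub_zero] at hsec
  -- hsec : (exp (β*x) - 1)/(β*x) < (exp (lam*x) - 1)/(lam*x)
  have key : lam * (Real.exp (β * x) - 1) < β * (Real.exp (lam * x) - 1) := by
    rw [div_lt_div_iff₀ hbx hlx] at hsec
    nlinarith
  constructor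
  · have h1 : 0 < (lam / β) * ((Real.exp (β * x) - 1) / (Real.exp (lam * x) - 1)) := by
      positivity
    linarith
  · have h2 : (lam / β) * ((Real.exp (β * x) - 1) / (Real.exp (lam * x) - 1)) < 1 := by
      rw [div_mul_div_comm, div_lt_one (by positivity)]
      nlinarith
    linarith
end

section
/- Let β, γ, α > 0 with β ≠ γ, and define h(x) = (γ/β)·((e^{βx^α} − 1)/(e^{γx^α} − 1)) − 1 for x > 0. If β > γ then h is monotone increasing on (0, ∞), and if β < γ then h is monotone decreasing on (0, ∞). -/
open Real Set

lemma hasDerivAt_N (c : ℝ) {x : ℝ} (hx : 0 < x) :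
    HasDerivAt (fun x : ℝ => c * x ^ (c-1) * (x - 1) - x ^ c + 1)
      (c * (c-1) * x ^ (c-2) * (x-1)) x := by
  have hp : HasDerivAt (fun x : ℝ => x ^ (c-1)) ((c-1) * x ^ (c-2)) x := by
    have := Real.hasDerivAt_rpow_const (x := x) (p := c-1) (Or.inl hx.ne')
    convert this using 2
    ring_nf
  have h2 : HasDerivAt (fun x : ℝ => x - 1) 1 x := (hasDerivAt_id x).sub_const 1
  have hq : HasDerivAt (fun x : ℝ => x ^ c) (c * x ^ (c-1)) x :=
    Real.hasDerivAt_rpow_const (Or.inl hx.ne')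
  have hthis := (((hp.mul h2).const_mul c).sub hq).add_const 1
  have hx1 : x ^ (c-1) = x ^ (c-2) * x := by
    rw [← Real.rpow_add_one hx.ne']
    ring_nf
  have hD : c * ((c-1) * x ^ (c-2) * (x-1) + x ^ (c-1) * 1) - c * x ^ (c-1)
      = c * (c-1) * x ^ (c-2) * (x-1) := by rw [hx1]; ring
  rw [hD] at hthis
  have hfun : (fun x : ℝ => c * (x ^ (c-1) * (x - 1)) - x ^ c + 1)
      = (fun x : ℝ => c * x ^ (c-1) * (x - 1) - x ^ c + 1) := by
    funext z; ring
  refine hthis.congr_of_eventuallyEq (Filter.Eventually.of_forall fun z => ?_)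
  simp only [Pi.mul_apply, Pi.sub_apply]
  ring

lemma hasDerivAt_g (c : ℝ) {x : ℝ} (hx : 1 < x) :
    HasDerivAt (fun x : ℝ => (x ^ c - 1) / (x - 1))
      ((c * x ^ (c-1) * (x-1) - (x ^ c - 1)) / (x-1)^2) x := by
  have h1 : HasDerivAt (fun x : ℝ => x ^ c - 1) (c * x ^ (c-1)) x :=
    (Real.hasDerivAt_rpow_const (Or.inl (by linarith))).sub_const 1
  have h2 : HasDerivAt (fun x : ℝ => x - 1) 1 x := (hasDerivAt_id x).sub_const 1
  have := h1.div h2 (sub_ne_zero.2 (ne_of_gt hx))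
  refine this.congr_deriv ?_
  ring

lemma N_pos {c : ℝ} (hc : 1 < c) {x : ℝ} (hx : 1 < x) :
    0 < c * x ^ (c-1) * (x - 1) - x ^ c + 1 := by
  have hmono : StrictMonoOn (fun x : ℝ => c * x ^ (c-1) * (x - 1) - x ^ c + 1) (Ici 1) := by
    apply strictMonoOn_of_deriv_pos (convex_Ici 1)
    · intro y hy
      have hy0 : (0:ℝ) < y := lt_of_lt_of_le one_pos hy
      exact (hasDerivAt_N c hy0).continuousAt.continuousWithinAt
    · intro y hy
      rw [interior_Ici] at hy
      have hy1 : (1:ℝ) < y := hy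
      rw [(hasDerivAt_N c (by linarith)).deriv]
      have h1 := Real.rpow_pos_of_pos (by linarith : (0:ℝ) < y) (c-2)
      have h2 : (0:ℝ) < c - 1 := by linarith
      have h3 : (0:ℝ) < y - 1 := by linarith
      positivity
  have h0 := hmono self_mem_Ici (Set.mem_Ici.2 hx.le) hx
  simp only [Real.one_rpow] at h0
  linarith
  
lemma g_mono {c : ℝ} (hc : 1 < c) : StrictMonoOn (fun x : ℝ => (x ^ c - 1) / (x - 1)) (Ioi 1) := by
  apply strictMonoOn_of_deriv_pos (convex_Ioi 1)
  · intro y hy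
    exact (hasDerivAt_g c hy).continuousAt.continuousWithinAt
  · intro y hy
    rw [interior_Ioi] at hy
    rw [(hasDerivAt_g c hy).deriv]
    have hN := N_pos hc hy
    have hy1 : (1:ℝ) < y := hy
    have hd : (0:ℝ) < (y-1)^2 := pow_pos (by linarith) 2
    exact div_pos (by linarith) hd

lemma g_pos {c : ℝ} (hc : 0 < c) {x : ℝ} (hx : 1 < x) : 0 < (x ^ c - 1) / (x - 1) := by
  have h1 : 1 < x ^ c := Real.one_lt_rpow_iff_of_pos (by linarith) |>.2 (Or.inl ⟨hx, hc⟩)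
  exact div_pos (by linarith) (by linarith)

/-- For `β, γ, α > 0` with `β ≠ γ`, the function
`h x = (γ/β) * ((e^{βx^α} - 1)/(e^{γx^α} - 1)) - 1` is (strictly) increasing on
`(0,∞)` when `β > γ`, and (strictly) decreasing on `(0,∞)` when `β < γ`. -/
theorem stmt_6 (β γ α : ℝ) (hβ : 0 < β) (hγ : 0 < γ) (hα : 0 < α) (hne : β ≠ γ)
    (h : ℝ → ℝ)
    (hh : ∀ x, h x = (γ / β) * ((Real.exp (β * x ^ α) - 1) / (Real.exp (γ * x ^ α) - 1)) - 1) :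
    (β > γ → StrictMonoOn h (Set.Ioi (0 : ℝ))) ∧
      (β < γ → StrictAntiOn h (Set.Ioi (0 : ℝ))) := by
  have hrpow : ∀ {x y : ℝ}, 0 < x → x < y → x ^ α < y ^ α := fun hx hxy =>
    Real.rpow_lt_rpow (le_of_lt hx) hxy hα
  constructor
  · intro hbg
    intro x hx y hy hxy
    have hx0 : (0:ℝ) < x := hx
    have ht : x ^ α < y ^ α := hrpow hx0 hxy
    have htp : 0 < x ^ α := Real.rpow_pos_of_pos hx0 α
    set c := β / γ with hcdef
    have hc : 1 < c := (one_lt_div hγ).2 hbg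
    have hu : 1 < Real.exp (γ * x ^ α) := by
      rw [Real.one_lt_exp_iff]; positivity
    have huv : Real.exp (γ * x ^ α) < Real.exp (γ * y ^ α) := by
      apply Real.exp_lt_exp.2; nlinarith
    have key : (Real.exp (γ * x ^ α) ^ c - 1) / (Real.exp (γ * x ^ α) - 1)
        < (Real.exp (γ * y ^ α) ^ c - 1) / (Real.exp (γ * y ^ α) - 1) :=
      g_mono hc hu (Set.mem_Ioi.2 (lt_trans hu huv)) huv
    have hpow : ∀ t : ℝ, Real.exp (γ * t) ^ c = Real.exp (β * t) := by
      intro t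
      rw [← Real.exp_log (x := Real.exp (γ * t) ^ c) (by positivity),
        Real.log_rpow (Real.exp_pos _), Real.log_exp]
      congr 1
      rw [hcdef]
      field_simp
    rw [hpow, hpow] at key
    rw [hh x, hh y]
    have hgb : 0 < γ / β := by positivity
    have := mul_lt_mul_of_pos_left key hgb
    linarith
  · intro hbg
    intro x hx y hy hxy
    have hx0 : (0:ℝ) < x := hx
    have ht : x ^ α < y ^ α := hrpow hx0 hxy
    have htp : 0 < x ^ α := Real.rpow_pos_of_pos hx0 α
    set c := γ / β with hcdef
    have hc : 1 < c := (one_lt_div hβ).2 hbg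
    have hu : 1 < Real.exp (β * x ^ α) := by
      rw [Real.one_lt_exp_iff]; positivity
    have huv : Real.exp (β * x ^ α) < Real.exp (β * y ^ α) := by
      apply Real.exp_lt_exp.2; nlinarith
    have key : (Real.exp (β * x ^ α) ^ c - 1) / (Real.exp (β * x ^ α) - 1)
        < (Real.exp (β * y ^ α) ^ c - 1) / (Real.exp (β * y ^ α) - 1) :=
      g_mono hc hu (Set.mem_Ioi.2 (lt_trans hu huv)) huv
    have hgu : 0 < (Real.exp (β * x ^ α) ^ c - 1) / (Real.exp (β * x ^ α) - 1) :=
      g_pos (by linarith) hu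
    have hpow : ∀ t : ℝ, Real.exp (β * t) ^ c = Real.exp (γ * t) := by
      intro t
      rw [← Real.exp_log (x := Real.exp (β * t) ^ c) (by positivity),
        Real.log_rpow (Real.exp_pos _), Real.log_exp]
      congr 1
      rw [hcdef]
      field_simp
    rw [hpow] at hgu
    rw [hpow, hpow] at key
    rw [hh x, hh y]
    have hrec : (Real.exp (β * y ^ α) - 1) / (Real.exp (γ * y ^ α) - 1)
        < (Real.exp (β * x ^ α) - 1) / (Real.exp (γ * x ^ α) - 1) := by
      have h1 := one_div_lt_one_div_of_lt hgu key
      rw [one_div_div, one_div_div] at h1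
      exact h1
    have hgb : 0 < γ / β := by positivity
    have := mul_lt_mul_of_pos_left hrec hgb
    linarith
end

section
/- Let k ≥ 1 and a₁, …, a_k ≥ 0 with at least one aᵢ > 0. The relative error in the aging intensity function of the Multivariate Gumbel Type 1 series system, E^L(x) = (Σ_{i=1}^k i·aᵢ·xⁱ)/(Σ_{i=1}^k aᵢ·xⁱ) − 1, satisfies 0 ≤ E^L(x) ≤ k − 1 for every x > 0. -/
/-- For `k ≥ 1` and coefficients `a 1, …, a k ≥ 0`, not all zero, the relative error in
the aging intensity of the Multivariate Gumbel Type 1 series system,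
`E x = (∑ i ∈ [1,k], i * a i * x ^ i) / (∑ i ∈ [1,k], a i * x ^ i) - 1`,
satisfies `0 ≤ E x ≤ k - 1` for every `x > 0`. -/
theorem stmt_11 (k : ℕ) (hk : 1 ≤ k) (a : ℕ → ℝ)
    (ha : ∀ i ∈ Finset.Icc 1 k, 0 ≤ a i) (ha' : ∃ i ∈ Finset.Icc 1 k, 0 < a i)
    (E : ℝ → ℝ)
    (hE : ∀ x, E x = (∑ i ∈ Finset.Icc 1 k, (i : ℝ) * a i * x ^ i) /
        (∑ i ∈ Finset.Icc 1 k, a i * x ^ i) - 1) :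
    ∀ x > (0 : ℝ), 0 ≤ E x ∧ E x ≤ (k : ℝ) - 1 := by
  intro x hx
  obtain ⟨j, hj, hja⟩ := ha'
  have hterm : ∀ i ∈ Finset.Icc 1 k, 0 ≤ a i * x ^ i := fun i hi =>
    mul_nonneg (ha i hi) (pow_nonneg hx.le i)
  have hD : 0 < ∑ i ∈ Finset.Icc 1 k, a i * x ^ i := by
    apply Finset.sum_pos' hterm
    exact ⟨j, hj, mul_pos hja (pow_pos hx j)⟩
  have hlow : ∑ i ∈ Finset.Icc 1 k, a i * x ^ i
      ≤ ∑ i ∈ Finset.Icc 1 k, (i : ℝ) * a i * x ^ i := by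
    apply Finset.sum_le_sum
    intro i hi
    have h1 : (1 : ℝ) ≤ (i : ℝ) := by
      exact_mod_cast (Finset.mem_Icc.mp hi).1
    nlinarith [hterm i hi]
  have hhigh : ∑ i ∈ Finset.Icc 1 k, (i : ℝ) * a i * x ^ i
      ≤ (k : ℝ) * ∑ i ∈ Finset.Icc 1 k, a i * x ^ i := by
    rw [Finset.mul_sum]
    apply Finset.sum_le_sum
    intro i hi
    have h1 : (i : ℝ) ≤ (k : ℝ) := by
      exact_mod_cast (Finset.mem_Icc.mp hi).2
    nlinarith [hterm i hi]
  rw [hE]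
  constructor
  · have := (one_le_div hD).mpr hlow
    linarith
  · have := (div_le_iff₀ hD).mpr hhigh
    linarith
end

section
/- Let α > 0 and 0 < b < λ_L. The relative error in the reversed hazard rate of the multivariate Lee (1979) series system, E^μ(x) = (λ_L/b)·((e^{b x^α} − 1)/(e^{λ_L x^α} − 1)) − 1, is negative for every x > 0 and monotone decreasing in x on (0, ∞). -/
open Real Set

private lemma key1 {b l : ℝ} (hb : 0 < b) (hlt : b < l) :
    ∀ t > (0:ℝ), l * (Real.exp (b*t) - 1) < b * (Real.exp (l*t) - 1) := by
  have hd : ∀ t : ℝ, HasDerivAt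
      (fun t => b * (Real.exp (l*t) - 1) - l * (Real.exp (b*t) - 1))
      (b * (Real.exp (l*t) * l) - l * (Real.exp (b*t) * b)) t := by
    intro t
    have h1 : HasDerivAt (fun t : ℝ => Real.exp (l*t)) (Real.exp (l*t) * l) t :=
      by simpa using ((hasDerivAt_id t).const_mul l).exp
    have h2 : HasDerivAt (fun t : ℝ => Real.exp (b*t)) (Real.exp (b*t) * b) t :=
      by simpa using ((hasDerivAt_id t).const_mul b).exp
    exact ((h1.sub_const 1).const_mul b).sub ((h2.sub_const 1).const_mul l)
  have mono : StrictMonoOn (fun t => b * (Real.exp (l*t) - 1) - l * (Real.exp (b*t) - 1))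
      (Set.Ici (0:ℝ)) := by
    apply strictMonoOn_of_deriv_pos (convex_Ici 0)
    · exact fun t _ => (hd t).continuousAt.continuousWithinAt
    · intro t ht
      rw [interior_Ici] at ht
      rw [(hd t).deriv]
      have hexp : Real.exp (b*t) < Real.exp (l*t) :=
        Real.exp_lt_exp.2 (by nlinarith [Set.mem_Ioi.1 ht])
      nlinarith [mul_pos (mul_pos hb (hb.trans hlt)) (sub_pos.2 hexp)]
  intro t ht
  have h := mono (Set.self_mem_Ici) (Set.mem_Ici.2 ht.le) ht
  simp only [mul_zero, Real.exp_zero] at h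
  linarith

private lemma key2 {b l : ℝ} (hb : 0 < b) (hlt : b < l) :
    ∀ t > (0:ℝ),
      b * Real.exp (b*t) * (Real.exp (l*t) - 1) < l * Real.exp (l*t) * (Real.exp (b*t) - 1) := by
  have hd : ∀ t : ℝ, HasDerivAt
      (fun t => (l - b) - l * Real.exp (-(b*t)) + b * Real.exp (-(l*t)))
      (-(l * (Real.exp (-(b*t)) * (-b))) + b * (Real.exp (-(l*t)) * (-l))) t := by
    intro t
    have h1 : HasDerivAt (fun t : ℝ => Real.exp (-(b*t))) (Real.exp (-(b*t)) * (-b)) t := by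
      simpa using (((hasDerivAt_id t).const_mul b).neg).exp
    have h2 : HasDerivAt (fun t : ℝ => Real.exp (-(l*t))) (Real.exp (-(l*t)) * (-l)) t := by
      simpa using (((hasDerivAt_id t).const_mul l).neg).exp
    exact (((h1.const_mul l).const_sub (l - b)).add (h2.const_mul b))
  have mono : StrictMonoOn (fun t => (l - b) - l * Real.exp (-(b*t)) + b * Real.exp (-(l*t)))
      (Set.Ici (0:ℝ)) := by
    apply strictMonoOn_of_deriv_pos (convex_Ici 0)
    · exact fun t _ => (hd t).continuousAt.continuousWithinAt
    · intro t ht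
      rw [interior_Ici] at ht
      rw [(hd t).deriv]
      have hexp : Real.exp (-(l*t)) < Real.exp (-(b*t)) :=
        Real.exp_lt_exp.2 (by nlinarith [Set.mem_Ioi.1 ht])
      nlinarith [mul_pos (mul_pos hb (hb.trans hlt)) (sub_pos.2 hexp)]
  intro t ht
  have h := mono (Set.self_mem_Ici) (Set.mem_Ici.2 ht.le) ht
  simp only [mul_zero, neg_zero, Real.exp_zero, mul_one] at h
  -- h : (l - b) - l + b < (l - b) - l * exp(-(b*t)) + b * exp(-(l*t))
  have hg : 0 < (l - b) - l * Real.exp (-(b*t)) + b * Real.exp (-(l*t)) := by linarith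
  have e1 : Real.exp (-(b*t)) * Real.exp (b*t) = 1 := by
    rw [← Real.exp_add]; simp
  have e2 : Real.exp (-(l*t)) * Real.exp (l*t) = 1 := by
    rw [← Real.exp_add]; simp
  have hBL : 0 < Real.exp (b*t) * Real.exp (l*t) :=
    mul_pos (Real.exp_pos _) (Real.exp_pos _)
  have key := mul_pos hg hBL
  have expand : ((l - b) - l * Real.exp (-(b*t)) + b * Real.exp (-(l*t))) *
      (Real.exp (b*t) * Real.exp (l*t))
      = (l - b) * (Real.exp (b*t) * Real.exp (l*t))
        - l * (Real.exp (-(b*t)) * Real.exp (b*t)) * Real.exp (l*t)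
        + b * (Real.exp (-(l*t)) * Real.exp (l*t)) * Real.exp (b*t) := by ring
  rw [expand, e1, e2] at key
  nlinarith [key]

/-- For `α > 0` and `0 < b < λ_L`, the relative error in the reversed hazard rate of the
multivariate Lee (1979) series system,
`E x = (λ_L/b) * ((e^{b x^α} - 1)/(e^{λ_L x^α} - 1)) - 1`, is negative for every `x > 0`
and (strictly) decreasing on `(0,∞)`. -/
theorem stmt_14 (α b lamL : ℝ) (hα : 0 < α) (hb : 0 < b) (hlt : b < lamL)
    (E : ℝ → ℝ)
    (hE : ∀ x, E x =
        (lamL / b) * ((Real.exp (b * x ^ α) - 1) / (Real.exp (lamL * x ^ α) - 1)) - 1) :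
    (∀ x > (0 : ℝ), E x < 0) ∧ StrictAntiOn E (Set.Ioi (0 : ℝ)) := by
  have hEq : E = fun x => (lamL / b) * ((Real.exp (b * x ^ α) - 1) / (Real.exp (lamL * x ^ α) - 1)) - 1 :=
    funext hE
  subst hEq
  have hl : 0 < lamL := hb.trans hlt
  -- denominator positivity for x > 0
  have hDpos : ∀ x > (0:ℝ), 0 < Real.exp (lamL * x ^ α) - 1 := by
    intro x hx
    have ht : 0 < x ^ α := Real.rpow_pos_of_pos hx α
    have : (0:ℝ) < lamL * x ^ α := mul_pos hl ht
    have := Real.add_one_lt_exp (ne_of_gt this)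
    linarith
  -- derivative of E at x > 0
  have hder : ∀ x ∈ Set.Ioi (0:ℝ), HasDerivAt
      (fun x => (lamL / b) * ((Real.exp (b * x ^ α) - 1) / (Real.exp (lamL * x ^ α) - 1)) - 1)
      ((lamL / b) *
        ((Real.exp (b * x ^ α) * (b * (α * x ^ (α - 1))) * (Real.exp (lamL * x ^ α) - 1)
          - (Real.exp (b * x ^ α) - 1) * (Real.exp (lamL * x ^ α) * (lamL * (α * x ^ (α - 1)))))
          / (Real.exp (lamL * x ^ α) - 1) ^ 2)) x := by
    intro x hx
    have hx0 : (0:ℝ) < x := hx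
    have hrp : HasDerivAt (fun y : ℝ => y ^ α) (α * x ^ (α - 1)) x :=
      Real.hasDerivAt_rpow_const (Or.inl hx0.ne')
    have hN : HasDerivAt (fun y : ℝ => Real.exp (b * y ^ α) - 1)
        (Real.exp (b * x ^ α) * (b * (α * x ^ (α - 1)))) x :=
      ((hrp.const_mul b).exp).sub_const 1
    have hD : HasDerivAt (fun y : ℝ => Real.exp (lamL * y ^ α) - 1)
        (Real.exp (lamL * x ^ α) * (lamL * (α * x ^ (α - 1)))) x :=
      ((hrp.const_mul lamL).exp).sub_const 1
    exact ((hN.div hD (hDpos x hx0).ne').const_mul (lamL / b)).sub_const 1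
  constructor
  · intro x hx
    have ht : 0 < x ^ α := Real.rpow_pos_of_pos hx α
    have hk := key1 hb hlt (x ^ α) ht
    have hD := hDpos x hx
    have hbD : 0 < b * (Real.exp (lamL * x ^ α) - 1) := mul_pos hb hD
    rw [sub_neg, div_mul_div_comm, div_lt_one hbD]
    linarith
  · apply strictAntiOn_of_deriv_neg (convex_Ioi 0)
    · exact fun x hx => (hder x hx).continuousAt.continuousWithinAt
    · intro x hx
      rw [interior_Ioi] at hx
      rw [(hder x hx).deriv]
      have hx0 : (0:ℝ) < x := hx
      have ht : 0 < x ^ α := Real.rpow_pos_of_pos hx0 α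
      have hk := key2 hb hlt (x ^ α) ht
      have hpw : 0 < α * x ^ (α - 1) := mul_pos hα (Real.rpow_pos_of_pos hx0 _)
      have hnum : Real.exp (b * x ^ α) * (b * (α * x ^ (α - 1))) * (Real.exp (lamL * x ^ α) - 1)
          - (Real.exp (b * x ^ α) - 1) * (Real.exp (lamL * x ^ α) * (lamL * (α * x ^ (α - 1)))) < 0 := by
        nlinarith [hk, hpw]
      have hden : 0 < (Real.exp (lamL * x ^ α) - 1) ^ 2 :=
        pow_pos (hDpos x hx0) 2
      have : (Real.exp (b * x ^ α) * (b * (α * x ^ (α - 1))) * (Real.exp (lamL * x ^ α) - 1)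
          - (Real.exp (b * x ^ α) - 1) * (Real.exp (lamL * x ^ α) * (lamL * (α * x ^ (α - 1)))))
          / (Real.exp (lamL * x ^ α) - 1) ^ 2 < 0 := div_neg_of_neg_of_pos hnum hden
      exact mul_neg_of_pos_of_neg (div_pos hl hb) this
end
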